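/- Let (Ω, F, P) be a probability space with a discrete-time filtration (F_k)_{k = 0,…,n}, and let D be a nonempty finite index set. For each a ∈ D let (X^a_k)_{k ≤ n} be an adapted integrable process and (M^a_k)_{k ≤ n} a martingale with M^a_0 = 0. Then for every a ∈ D and every stopping time τ with values in {0, 1, …, n}: E[ X^a_τ ] ≤ E[ max_{b ∈ D} max_{0 ≤ k ≤ n} ( X^b_k − M^b_k ) ]. Consequently, sup_{a ∈ D} sup_{τ} E[ X^a_τ ] ≤ E[ max_{b ∈ D} max_{0 ≤ k ≤ n} ( X^b_k − M^b_k ) ]. -/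

import Mathlib

open MeasureTheory

lemma integrable_finset_sup'_aux {Ω : Type*} [MeasurableSpace Ω] (P : Measure Ω)
    {ι : Type*} {s : Finset ι} (hs : s.Nonempty) (f : ι → Ω → ℝ)
    (hf : ∀ i ∈ s, Integrable (f i) P) :
    Integrable (fun ω => s.sup' hs fun i => f i ω) P := by
  revert hf
  induction hs using Finset.Nonempty.cons_induction with
  | singleton i => intro hf; simpa using hf i (by simp)
  | cons i s hi hs ih =>
      intro hf
      simp only [Finset.sup'_cons hs]
      exact (hf i (by simp)).sup (ih (fun j hj => hf j (by simp [hj])))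

/-- Discrete-time weak duality for American options: penalizing each controlled
payoff process by a martingale started at `0` and taking a pathwise maximum over
the finite control set and over time dominates the primal optimal
stopping/control value. -/
theorem american_weak_duality_discrete
    {Ω : Type*} [mΩ : MeasurableSpace Ω] (P : Measure Ω) [IsProbabilityMeasure P]
    (n : ℕ) (ℱ : Filtration ℕ mΩ) {D : Type*} [Fintype D] [Nonempty D]
    (X M : D → ℕ → Ω → ℝ)
    (hXa : ∀ a, Adapted ℱ (X a)) (hXi : ∀ a k, Integrable (X a k) P)
    (hM : ∀ a, Martingale (M a) ℱ P) (hM0 : ∀ (a : D) (ω : Ω), M a 0 ω = 0) :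
    (∀ (a : D) (τ : Ω → ℕ), IsStoppingTime ℱ (fun ω => (τ ω : WithTop ℕ)) → (∀ ω, τ ω ≤ n) →
      ∫ ω, X a (τ ω) ω ∂P ≤
        ∫ ω, Finset.univ.sup' Finset.univ_nonempty (fun b : D =>
          (Finset.range (n + 1)).sup' Finset.nonempty_range_add_one
            (fun k => X b k ω - M b k ω)) ∂P) ∧
    (⨆ a : D, ⨆ τ : {τ : Ω → ℕ // IsStoppingTime ℱ (fun ω => (τ ω : WithTop ℕ)) ∧ ∀ ω, τ ω ≤ n},
        ∫ ω, X a (τ.1 ω) ω ∂P) ≤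
      ∫ ω, Finset.univ.sup' Finset.univ_nonempty (fun b : D =>
        (Finset.range (n + 1)).sup' Finset.nonempty_range_add_one
          (fun k => X b k ω - M b k ω)) ∂P := by
  -- the dual upper bound process
  set S : Ω → ℝ := fun ω => Finset.univ.sup' Finset.univ_nonempty (fun b : D =>
      (Finset.range (n + 1)).sup' Finset.nonempty_range_add_one
        (fun k => X b k ω - M b k ω)) with hS
  have hSint : Integrable S P := by
    apply integrable_finset_sup'_aux P Finset.univ_nonempty
    intro b _
    apply integrable_finset_sup'_aux P Finset.nonempty_range_add_one
    intro k _
    exact (hXi b k).sub ((hM b).integrable k)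
  have main : ∀ (a : D) (τ : Ω → ℕ), IsStoppingTime ℱ (fun ω => (τ ω : WithTop ℕ)) → (∀ ω, τ ω ≤ n) →
      ∫ ω, X a (τ ω) ω ∂P ≤ ∫ ω, S ω ∂P := by
    intro a τ hτ hbdd
    set σ : Ω → WithTop ℕ := fun ω => (τ ω : WithTop ℕ) with hσ
    have hbdd' : ∀ ω, σ ω ≤ (n : WithTop ℕ) := fun ω => WithTop.coe_le_coe.2 (hbdd ω)
    have hXτ : Integrable (stoppedValue (X a) σ) P :=
      integrable_stoppedValue ℕ hτ (fun k => hXi a k) hbdd'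
    have hMτ : Integrable (stoppedValue (M a) σ) P :=
      integrable_stoppedValue ℕ hτ (fun k => (hM a).integrable k) hbdd'
    -- zero stopping time
    have hτ0 : IsStoppingTime ℱ (fun _ : Ω => ((0 : ℕ) : WithTop ℕ)) := isStoppingTime_const ℱ 0
    have hle : (fun _ : Ω => ((0 : ℕ) : WithTop ℕ)) ≤ σ := fun ω => WithTop.coe_le_coe.2 (Nat.zero_le _)
    have hzero : ∫ ω, stoppedValue (M a) (fun _ => ((0 : ℕ) : WithTop ℕ)) ω ∂P = 0 := by
      have : ∀ ω, stoppedValue (M a) (fun _ => ((0:ℕ) : WithTop ℕ)) ω = 0 := fun ω => hM0 a ω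
      simp [stoppedValue, hM0]
    have h1 : ∫ ω, stoppedValue (M a) (fun _ => ((0 : ℕ) : WithTop ℕ)) ω ∂P ≤ ∫ ω, stoppedValue (M a) σ ω ∂P :=
      (hM a).submartingale.expected_stoppedValue_mono hτ0 hτ hle hbdd'
    have h2 : ∫ ω, stoppedValue (-(M a)) (fun _ => ((0 : ℕ) : WithTop ℕ)) ω ∂P ≤ ∫ ω, stoppedValue (-(M a)) σ ω ∂P :=
      (hM a).neg.submartingale.expected_stoppedValue_mono hτ0 hτ hle hbdd'
    have hneg : ∀ (σ : Ω → WithTop ℕ), stoppedValue (-(M a)) σ = fun ω => -stoppedValue (M a) σ ω :=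
      fun σ => rfl
    have hEMτ : ∫ ω, stoppedValue (M a) σ ω ∂P = 0 := by
      simp only [hneg, integral_neg] at h2
      rw [hzero] at h1
      linarith
    have hpt : ∀ ω, stoppedValue (X a) σ ω - stoppedValue (M a) σ ω ≤ S ω := by
      intro ω
      have hmem : τ ω ∈ Finset.range (n + 1) := Finset.mem_range.2 (Nat.lt_succ_of_le (hbdd ω))
      calc stoppedValue (X a) σ ω - stoppedValue (M a) σ ω
          = X a (τ ω) ω - M a (τ ω) ω := rfl
        _ ≤ (Finset.range (n + 1)).sup' Finset.nonempty_range_add_one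
              (fun k => X a k ω - M a k ω) := Finset.le_sup' (fun k => X a k ω - M a k ω) hmem
        _ ≤ S ω := by
              exact Finset.le_sup' (fun b : D => (Finset.range (n + 1)).sup'
                Finset.nonempty_range_add_one (fun k => X b k ω - M b k ω)) (Finset.mem_univ a)
    have hint : ∫ ω, (stoppedValue (X a) σ ω - stoppedValue (M a) σ ω) ∂P ≤ ∫ ω, S ω ∂P :=
      integral_mono (hXτ.sub hMτ) hSint hpt
    have : ∫ ω, X a (τ ω) ω ∂P = ∫ ω, (stoppedValue (X a) σ ω - stoppedValue (M a) σ ω) ∂P := by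
      rw [integral_sub hXτ hMτ, hEMτ, sub_zero]
      rfl
    rw [this]
    exact hint
  refine ⟨main, ?_⟩
  have hτne : Nonempty {τ : Ω → ℕ // IsStoppingTime ℱ (fun ω => (τ ω : WithTop ℕ)) ∧ ∀ ω, τ ω ≤ n} :=
    ⟨⟨fun _ => 0, isStoppingTime_const ℱ 0, fun ω => Nat.zero_le n⟩⟩
  exact ciSup_le fun a => ciSup_le fun τ => main a τ.1 τ.2.1 τ.2.2
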